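/- Let n ≥ 5 with n ≡ 1 (mod 6), and let x_0,...,x_{n-1} be nonnegative integers (indices modulo n) with x_i ≤ 1 and x_i + x_{i+1} + x_{i+2} ≥ 2 for all i. Then Σ_{i=0}^{n-1} x_i ≥ 2⌊n/3⌋ + 1. -/
import Mathlib


theorem lower_bound_1_mod_6 (n : ℕ) (hn : 5 ≤ n) (h6 : n % 6 = 1) (x : ZMod n → ℕ)
    (hle : ∀ i, x i ≤ 1) (hsum : ∀ i, 2 ≤ x i + x (i + 1) + x (i + 2)) :
    2 * (n / 3) + 1 ≤ ∑ i ∈ Finset.range n, x (i : ZMod n) := by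
  haveI : NeZero n := ⟨by omega⟩
  have hrange : ∑ i ∈ Finset.range n, x (i : ZMod n) = ∑ i : ZMod n, x i :=
    Finset.sum_nbij' (fun i => (i : ZMod n)) (fun j => j.val)
      (fun i _ => Finset.mem_univ _)
      (fun j _ => Finset.mem_range.mpr (ZMod.val_lt j))
      (fun i hi => ZMod.val_cast_of_lt (Finset.mem_range.mp hi))
      (fun j _ => ZMod.natCast_rightInverse j)
      (fun i _ => rfl)
  set S := ∑ i : ZMod n, x i with hS
  have hshift : ∀ c : ZMod n, ∑ i : ZMod n, x (i + c) = S :=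
    fun c => Equiv.sum_comp (Equiv.addRight c) x
  have h3 : ∑ i : ZMod n, (x i + x (i + 1) + x (i + 2)) = 3 * S := by
    simp only [Finset.sum_add_distrib, hshift 1, hshift 2]
    omega
  have hcard : Fintype.card (ZMod n) = n := ZMod.card n
  have hlb : 2 * n ≤ 3 * S := by
    calc 2 * n = ∑ _i : ZMod n, 2 := by
          rw [Finset.sum_const, Finset.card_univ, hcard]; ring
      _ ≤ ∑ i : ZMod n, (x i + x (i + 1) + x (i + 2)) :=
          Finset.sum_le_sum fun i _ => hsum i
      _ = 3 * S := h3
  rw [hrange]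
  omega
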